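/- Let Q = AB where A is a real d×(d−1) matrix of full column rank and B is a real (d−1)×d matrix of full row rank, and let A₁ := [A | 𝟏] and B₁ := [B ; −π^T] (both invertible). Define A⁺ := [I_{d−1} 0]·A₁^{-1} and B⁺ := B₁^{-1}·[I_{d−1} ; 0]. Then A⁺A = I_{d−1}, BB⁺ = I_{d−1}, and B⁺A⁺ = −D. -/

import Mathlib

open Matrix

theorem aux4 (e : ℕ)
    (Q : Matrix (Fin (e + 1)) (Fin (e + 1)) ℝ) (π : Fin (e + 1) → ℝ)
    (hrker : ∀ v : Fin (e + 1) → ℝ, Q.mulVec v = 0 ↔ ∃ c : ℝ, v = c • (1 : Fin (e + 1) → ℝ))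
    (hlker : ∀ w : Fin (e + 1) → ℝ, Q.vecMul w = 0 ↔ ∃ c : ℝ, w = c • π)
    (hπsum : π ⬝ᵥ 1 = 1)
    (hinv : IsUnit (vecMulVec 1 π - Q))
    (A : Matrix (Fin (e + 1)) (Fin e) ℝ) (B : Matrix (Fin e) (Fin (e + 1)) ℝ)
    (hQ : Q = A * B)
    (A₁ B₁ : Matrix (Fin (e + 1)) (Fin (e + 1)) ℝ)
    (hA₁d : A₁ = Matrix.of fun i => Fin.snoc (A i) (1 : ℝ))
    (hB₁d : B₁ = Matrix.of (Fin.snoc (fun i => B i) (fun j => -π j)))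
    (hA₁ : IsUnit A₁) (hB₁ : IsUnit B₁)
    (P : Matrix (Fin e) (Fin (e + 1)) ℝ)
    (E : Matrix (Fin (e + 1)) (Fin e) ℝ)
    (hPd : P = Matrix.of fun (i : Fin e) (j : Fin (e + 1)) => if j = Fin.castSucc i then (1 : ℝ) else 0)
    (hEd : E = Matrix.of fun (i : Fin (e + 1)) (j : Fin e) => if i = Fin.castSucc j then (1 : ℝ) else 0) :
    (P * A₁⁻¹) * A = 1 ∧ B * (B₁⁻¹ * E) = 1 ∧
      (B₁⁻¹ * E) * (P * A₁⁻¹) = -((vecMulVec 1 π - Q)⁻¹ - vecMulVec 1 π) := by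
  have hdA : IsUnit A₁.det := (Matrix.isUnit_iff_isUnit_det _).mp hA₁
  have hdB : IsUnit B₁.det := (Matrix.isUnit_iff_isUnit_det _).mp hB₁
  have hAE : A₁ * E = A := by
    ext i j
    simp [Matrix.mul_apply, hA₁d, hEd, mul_ite, mul_one, mul_zero, Finset.sum_ite_eq']
  have hPB : P * B₁ = B := by
    ext i j
    simp [Matrix.mul_apply, hPd, hB₁d, ite_mul, one_mul, zero_mul, Finset.sum_ite_eq]
  have hPE : P * E = 1 := by
    ext i j
    simp [Matrix.mul_apply, hPd, hEd, Matrix.one_apply, ite_mul, one_mul, zero_mul,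
      mul_ite, mul_one, mul_zero, Finset.sum_ite_eq, Fin.castSucc_inj, eq_comm]
  have g1 : (P * A₁⁻¹) * A = 1 := by
    rw [← hAE, Matrix.mul_assoc, ← Matrix.mul_assoc A₁⁻¹, Matrix.nonsing_inv_mul _ hdA,
      Matrix.one_mul, hPE]
  have g2 : B * (B₁⁻¹ * E) = 1 := by
    rw [← hPB, Matrix.mul_assoc, ← Matrix.mul_assoc B₁, Matrix.mul_nonsing_inv _ hdB,
      Matrix.one_mul, hPE]
  refine ⟨g1, g2, ?_⟩
  -- B *ᵥ 1 = 0
  have hQ1 : Q *ᵥ (1 : Fin (e + 1) → ℝ) = 0 := (hrker 1).mpr ⟨1, by simp⟩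
  have hB1 : B *ᵥ (1 : Fin (e + 1) → ℝ) = 0 := by
    have h1 : A *ᵥ (B *ᵥ (1 : Fin (e + 1) → ℝ)) = 0 := by
      rw [Matrix.mulVec_mulVec, ← hQ, hQ1]
    calc B *ᵥ (1 : Fin (e + 1) → ℝ)
        = ((P * A₁⁻¹) * A) *ᵥ (B *ᵥ 1) := by rw [g1, Matrix.one_mulVec]
      _ = (P * A₁⁻¹) *ᵥ (A *ᵥ (B *ᵥ 1)) := by rw [← Matrix.mulVec_mulVec]
      _ = 0 := by rw [h1, Matrix.mulVec_zero]
  -- π ᵥ* A = 0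
  have hπQ : π ᵥ* Q = 0 := by
    have := (hlker π).mpr ⟨1, by simp⟩
    simpa [Matrix.vecMul] using this
  have hπA : π ᵥ* A = 0 := by
    have h1 : (π ᵥ* A) ᵥ* B = 0 := by
      rw [Matrix.vecMul_vecMul, ← hQ]; exact hπQ
    calc π ᵥ* A = (π ᵥ* A) ᵥ* (B * (B₁⁻¹ * E)) := by rw [g2, Matrix.vecMul_one]
      _ = ((π ᵥ* A) ᵥ* B) ᵥ* (B₁⁻¹ * E) := by rw [← Matrix.vecMul_vecMul]
      _ = 0 := by rw [h1, Matrix.zero_vecMul]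
  -- last column of B₁⁻¹ is -1
  have hv : B₁ *ᵥ (fun _ => (-1 : ℝ)) = Pi.single (Fin.last e) 1 := by
    funext i
    refine Fin.lastCases ?_ ?_ i
    · show ∑ k, B₁ (Fin.last e) k * (-1) = _
      simp [hB₁d, ← Finset.sum_neg_distrib]
      simpa [dotProduct] using hπsum
    · intro m
      have hBm := congrFun hB1 m
      simp [Matrix.mulVec, dotProduct] at hBm
      simp [Matrix.mulVec, dotProduct, hB₁d, Fin.castSucc_lt_last,
        (Fin.castSucc_lt_last m).ne, ← Finset.sum_neg_distrib]
      simpa [Matrix.mulVec, dotProduct] using hBm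
  -- column extraction
  have hcol : ∀ i, B₁⁻¹ i (Fin.last e) = -1 := by
    intro i
    have h := congrArg (fun v => (B₁⁻¹ *ᵥ v) i) hv
    simp only [Matrix.mulVec_mulVec] at h
    rw [Matrix.nonsing_inv_mul _ hdB, Matrix.one_mulVec] at h
    simp [Matrix.mulVec, dotProduct, Pi.single_apply] at h
    linarith [h]
  -- row extraction
  have hw : π ᵥ* A₁ = Pi.single (Fin.last e) 1 := by
    funext j
    refine Fin.lastCases ?_ ?_ j
    · simp [Matrix.vecMul, dotProduct, hA₁d]
      simpa [dotProduct] using hπsum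
    · intro m
      have hm := congrFun hπA m
      simp [Matrix.vecMul, dotProduct] at hm
      simp [Matrix.vecMul, dotProduct, hA₁d, (Fin.castSucc_lt_last m).ne]
      simpa using hm
  have hrow : ∀ j, A₁⁻¹ (Fin.last e) j = π j := by
    intro j
    have h := congrArg (fun v => (v ᵥ* A₁⁻¹) j) hw
    rw [Matrix.vecMul_vecMul, Matrix.mul_nonsing_inv _ hdA, Matrix.vecMul_one] at h
    rw [h]
    simp [Matrix.vecMul, dotProduct, Pi.single_apply]
  -- key decomposition
  have key : (B₁⁻¹ * E) * (P * A₁⁻¹)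
      = B₁⁻¹ * A₁⁻¹ - vecMulVec (fun i => B₁⁻¹ i (Fin.last e)) (fun j => A₁⁻¹ (Fin.last e) j) := by
    ext i j
    simp only [Matrix.mul_apply, Matrix.sub_apply, Matrix.vecMulVec_apply, hEd, hPd,
      Matrix.of_apply, mul_ite, mul_one, mul_zero, ite_mul, one_mul, zero_mul,
      Finset.sum_ite_eq, Finset.sum_ite_eq', Finset.mem_univ, if_true]
    rw [Fin.sum_univ_castSucc]
    ring
  have hAB : A₁ * B₁ = -(vecMulVec 1 π - Q) := by
    ext i j
    simp only [Matrix.mul_apply, Matrix.neg_apply, Matrix.sub_apply, Matrix.vecMulVec_apply,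
      hA₁d, hB₁d, Matrix.of_apply, hQ]
    rw [Fin.sum_univ_castSucc]
    simp [Matrix.mul_apply]
    ring
  have hdX : IsUnit (vecMulVec 1 π - Q).det := (Matrix.isUnit_iff_isUnit_det _).mp hinv
  have hinvmul : B₁⁻¹ * A₁⁻¹ = -(vecMulVec 1 π - Q)⁻¹ := by
    rw [← Matrix.mul_inv_rev, hAB]
    exact Matrix.inv_eq_right_inv (by rw [neg_mul_neg, Matrix.mul_nonsing_inv _ hdX])
  rw [key, hinvmul]
  have : vecMulVec (fun i => B₁⁻¹ i (Fin.last e)) (fun j => A₁⁻¹ (Fin.last e) j)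
      = -vecMulVec 1 π := by
    ext i j
    simp [Matrix.vecMulVec_apply, hcol, hrow]
  rw [this]
  abel

/-- With `A₁ := [A | 𝟏]`, `B₁ := [B ; −πᵀ]` (both invertible),
`A⁺ := [I 0]·A₁⁻¹` and `B⁺ := B₁⁻¹·[I ; 0]`, one has `A⁺A = I`, `BB⁺ = I` and `B⁺A⁺ = −D`,
where `D := (𝟏πᵀ − Q)⁻¹ − 𝟏πᵀ`.
(The ambient dimension `d ≥ 2` is encoded as `e + 1` with `e ≥ 1`.) -/
theorem stmt_4
    (e : ℕ) (he : 1 ≤ e)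
    (Q : Matrix (Fin (e + 1)) (Fin (e + 1)) ℝ) (π : Fin (e + 1) → ℝ)
    (hQrank : Q.rank = e)
    (hrker : ∀ v : Fin (e + 1) → ℝ, Q.mulVec v = 0 ↔ ∃ c : ℝ, v = c • (1 : Fin (e + 1) → ℝ))
    (hlker : ∀ w : Fin (e + 1) → ℝ, Q.vecMul w = 0 ↔ ∃ c : ℝ, w = c • π)
    (hπsum : π ⬝ᵥ 1 = 1)
    (hinv : IsUnit (vecMulVec 1 π - Q))
    (A : Matrix (Fin (e + 1)) (Fin e) ℝ) (B : Matrix (Fin e) (Fin (e + 1)) ℝ)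
    (hA : A.rank = e) (hB : B.rank = e)
    (hQ : Q = A * B)
    (hA₁ : IsUnit (Matrix.of fun i => Fin.snoc (A i) (1 : ℝ)))
    (hB₁ : IsUnit (Matrix.of (Fin.snoc (fun i => B i) (fun j => -π j)))) :
    ((Matrix.of fun (i : Fin e) (j : Fin (e + 1)) => if j = Fin.castSucc i then (1 : ℝ) else 0) *
        (Matrix.of fun i => Fin.snoc (A i) (1 : ℝ))⁻¹) * A = 1 ∧
    B * ((Matrix.of (Fin.snoc (fun i => B i) (fun j => -π j)))⁻¹ *
        (Matrix.of fun (i : Fin (e + 1)) (j : Fin e) => if i = Fin.castSucc j then (1 : ℝ) else 0))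
      = 1 ∧
    ((Matrix.of (Fin.snoc (fun i => B i) (fun j => -π j)))⁻¹ *
        (Matrix.of fun (i : Fin (e + 1)) (j : Fin e) =>
          if i = Fin.castSucc j then (1 : ℝ) else 0)) *
      ((Matrix.of fun (i : Fin e) (j : Fin (e + 1)) => if j = Fin.castSucc i then (1 : ℝ) else 0) *
        (Matrix.of fun i => Fin.snoc (A i) (1 : ℝ))⁻¹)
      = -((vecMulVec 1 π - Q)⁻¹ - vecMulVec 1 π) := by
  obtain ⟨g1, g2, g3⟩ := aux4 e Q π hrker hlker hπsum hinv A B hQ _ _ rfl rfl hA₁ hB₁ _ _ rfl rfl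
  exact ⟨g1, g2, g3⟩
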